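/- Let G be a graph obtained from two disjoint graphs G₁ and G₂, each with at least two nodes, by identifying one node of G₁ with one node of G₂ into a cutnode v. Then every inclusionwise minimal proper cut of G is a proper cut of G₁ (extended by zeros) or a proper cut of G₂ (extended by zeros); consequently the minimum over proper cuts of G of a nonnegative cost c = (c₁, c₂) equals the minimum of the minimum proper cut value of (G₁, c₁) and that of (G₂, c₂). -/

import Mathlib

open Classical

noncomputable section

/-- The cut `δ(S)`: edges of `G` with exactly one endpoint in `S`. -/
def cutE {V : Type*} (G : SimpleGraph V) (S : Set V) : Set (Sym2 V) :=
  {e | e ∈ G.edgeSet ∧ ∃ u v, e = s(u, v) ∧ u ∈ S ∧ v ∉ S}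

/-- Characteristic vector of an edge set. -/
def chi {V : Type*} (C : Set (Sym2 V)) : Sym2 V → ℝ := fun e => if e ∈ C then 1 else 0

/-- Total cost of an edge set. -/
def cost {V : Type*} [Fintype V] [DecidableEq V] (c : Sym2 V → ℝ) (C : Set (Sym2 V)) : ℝ :=
  ∑ e ∈ Finset.univ.filter (· ∈ C), c e

lemma cost_nonneg {V : Type*} [Fintype V] [DecidableEq V] (c : Sym2 V → ℝ)
    (hc : ∀ e, 0 ≤ c e) (C : Set (Sym2 V)) : 0 ≤ cost c C :=
  Finset.sum_nonneg fun e _ => hc e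

lemma cost_mono {V : Type*} [Fintype V] [DecidableEq V] (c : Sym2 V → ℝ)
    (hc : ∀ e, 0 ≤ c e) {C C' : Set (Sym2 V)} (h : C' ⊆ C) :
    cost c C' ≤ cost c C := by
  apply Finset.sum_le_sum_of_subset_of_nonneg
  · intro e he
    simp only [Finset.mem_filter, Finset.mem_univ, true_and] at *
    exact h he
  · intro e _ _; exact hc e

lemma cutE_compl {V : Type*} (G : SimpleGraph V) (S : Set V) :
    cutE G Sᶜ = cutE G S := by
  ext e
  simp only [cutE, Set.mem_setOf_eq, Set.mem_compl_iff, not_not]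
  constructor
  · rintro ⟨he, u, w, rfl, hu, hw⟩
    exact ⟨he, w, u, Sym2.eq_swap, hw, hu⟩
  · rintro ⟨he, u, w, rfl, hu, hw⟩
    exact ⟨he, w, u, Sym2.eq_swap, hw, hu⟩

lemma cut_side {V : Type*} (G : SimpleGraph V) (A B : Set V) (v : V)
    (hAB : A ∩ B ⊆ {v})
    (hsep : ∀ e ∈ G.edgeSet, (∀ x ∈ e, x ∈ A) ∨ (∀ x ∈ e, x ∈ B))
    (T : Set V) (hvT : v ∉ T) :
    cutE G (T ∩ A) ⊆ cutE G T := by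
  rintro e ⟨he, u, w, rfl, hu, hw⟩
  refine ⟨he, u, w, rfl, hu.1, ?_⟩
  intro hwT
  apply hw
  refine ⟨hwT, ?_⟩
  rcases hsep _ he with h | h
  · exact h w (Sym2.mem_mk_right u w)
  · have huB := h u (Sym2.mem_mk_left u w)
    have huv : u = v := hAB ⟨hu.2, huB⟩
    exact absurd (huv ▸ hu.1) hvT

lemma cut_core {V : Type*} (G : SimpleGraph V) (A B : Set V) (v : V)
    (hunion : A ∪ B = Set.univ) (hinter : A ∩ B = {v})
    (hsep : ∀ e ∈ G.edgeSet, (∀ x ∈ e, x ∈ A) ∨ (∀ x ∈ e, x ∈ B))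
    (S : Set V) (hS : S.Nonempty) (hSU : S ≠ Set.univ) :
    ∃ T : Set V, T.Nonempty ∧ (T ⊆ A \ {v} ∨ T ⊆ B \ {v}) ∧ cutE G T ⊆ cutE G S := by
  have hvA : v ∈ A := by
    have : v ∈ A ∩ B := by rw [hinter]; exact rfl
    exact this.1
  obtain ⟨T₀, hT₀ne, hvT₀, hcut⟩ : ∃ T₀ : Set V,
      T₀.Nonempty ∧ v ∉ T₀ ∧ cutE G T₀ = cutE G S := by
    by_cases hv : v ∈ S
    · exact ⟨Sᶜ, Set.nonempty_compl.mpr hSU, fun h => h hv, cutE_compl G S⟩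
    · exact ⟨S, hS, hv, rfl⟩
  by_cases hTA : (T₀ ∩ A).Nonempty
  · refine ⟨T₀ ∩ A, hTA, Or.inl ?_, ?_⟩
    · intro x hx
      exact ⟨hx.2, fun h => hvT₀ ((Set.mem_singleton_iff.mp h) ▸ hx.1)⟩
    · rw [← hcut]
      exact cut_side G A B v hinter.le hsep T₀ hvT₀
  · refine ⟨T₀, hT₀ne, Or.inr ?_, hcut.le⟩
    intro x hx
    have hxA : x ∉ A := fun hA' => hTA ⟨x, hx, hA'⟩
    have hxAB : x ∈ A ∪ B := by rw [hunion]; exact Set.mem_univ x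
    rcases hxAB with h | h
    · exact absurd h hxA
    · exact ⟨h, fun heq => hxA ((Set.mem_singleton_iff.mp heq) ▸ hvA)⟩

theorem stmt17 {V : Type*} [Fintype V] [DecidableEq V] (G : SimpleGraph V)
    (A B : Set V) (v : V) (hunion : A ∪ B = Set.univ) (hinter : A ∩ B = {v})
    (hA : 2 ≤ A.ncard) (hB : 2 ≤ B.ncard)
    (hsep : ∀ e ∈ G.edgeSet, (∀ x ∈ e, x ∈ A) ∨ (∀ x ∈ e, x ∈ B))
    (c : Sym2 V → ℝ) (hc : ∀ e, 0 ≤ c e) :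
    (∀ S : Set V, S.Nonempty → S ≠ Set.univ →
      (∀ S' : Set V, S'.Nonempty → S' ≠ Set.univ →
        cutE G S' ⊆ cutE G S → cutE G S' = cutE G S) →
      (∃ S', S'.Nonempty ∧ S' ⊆ A \ {v} ∧ cutE G S = cutE G S') ∨
      (∃ S', S'.Nonempty ∧ S' ⊆ B \ {v} ∧ cutE G S = cutE G S')) ∧
    sInf {r | ∃ S : Set V, S.Nonempty ∧ S ≠ Set.univ ∧ r = cost c (cutE G S)} =
      min (sInf {r | ∃ S : Set V, S.Nonempty ∧ S ⊆ A \ {v} ∧ r = cost c (cutE G S)})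
          (sInf {r | ∃ S : Set V, S.Nonempty ∧ S ⊆ B \ {v} ∧ r = cost c (cutE G S)}) := by
  constructor
  · intro S hS hSU hmin
    obtain ⟨T, hTne, hside, hsub⟩ := cut_core G A B v hunion hinter hsep S hS hSU
    have hvT : v ∉ T := by
      rcases hside with h | h
      · exact fun hv => (h hv).2 rfl
      · exact fun hv => (h hv).2 rfl
    have hTU : T ≠ Set.univ := fun h => hvT (h ▸ Set.mem_univ v)
    have heq := hmin T hTne hTU hsub
    rcases hside with h | h
    · exact Or.inl ⟨T, hTne, h, heq.symm⟩
    · exact Or.inr ⟨T, hTne, h, heq.symm⟩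
  · set L := {r | ∃ S : Set V, S.Nonempty ∧ S ≠ Set.univ ∧ r = cost c (cutE G S)} with hL
    set LA := {r | ∃ S : Set V, S.Nonempty ∧ S ⊆ A \ {v} ∧ r = cost c (cutE G S)} with hLA
    set LB := {r | ∃ S : Set V, S.Nonempty ∧ S ⊆ B \ {v} ∧ r = cost c (cutE G S)} with hLB
    have hLbdd : BddBelow L := by
      refine ⟨0, ?_⟩
      rintro r ⟨S, _, _, rfl⟩
      exact cost_nonneg c hc _
    have hLAbdd : BddBelow LA := by
      refine ⟨0, ?_⟩
      rintro r ⟨S, _, _, rfl⟩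
      exact cost_nonneg c hc _
    have hLBbdd : BddBelow LB := by
      refine ⟨0, ?_⟩
      rintro r ⟨S, _, _, rfl⟩
      exact cost_nonneg c hc _
    obtain ⟨a, haA, hav⟩ := Set.exists_ne_of_one_lt_ncard (by omega : 1 < A.ncard) v
    obtain ⟨b, hbB, hbv⟩ := Set.exists_ne_of_one_lt_ncard (by omega : 1 < B.ncard) v
    have hLAne : LA.Nonempty :=
      ⟨cost c (cutE G {a}), {a}, Set.singleton_nonempty a,
        fun x hx => ⟨(Set.mem_singleton_iff.mp hx) ▸ haA,
          fun h => hav ((Set.mem_singleton_iff.mp hx) ▸ (Set.mem_singleton_iff.mp h))⟩, rfl⟩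
    have hLBne : LB.Nonempty :=
      ⟨cost c (cutE G {b}), {b}, Set.singleton_nonempty b,
        fun x hx => ⟨(Set.mem_singleton_iff.mp hx) ▸ hbB,
          fun h => hbv ((Set.mem_singleton_iff.mp hx) ▸ (Set.mem_singleton_iff.mp h))⟩, rfl⟩
    have hsubA : LA ⊆ L := by
      rintro r ⟨S, hSne, hSsub, rfl⟩
      refine ⟨S, hSne, ?_, rfl⟩
      intro h
      exact (hSsub (h ▸ Set.mem_univ v)).2 rfl
    have hsubB : LB ⊆ L := by
      rintro r ⟨S, hSne, hSsub, rfl⟩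
      refine ⟨S, hSne, ?_, rfl⟩
      intro h
      exact (hSsub (h ▸ Set.mem_univ v)).2 rfl
    have hLne : L.Nonempty := hLAne.mono hsubA
    refine le_antisymm (le_min (csInf_le_csInf hLbdd hLAne hsubA)
      (csInf_le_csInf hLbdd hLBne hsubB)) ?_
    refine le_csInf hLne ?_
    rintro r ⟨S, hSne, hSU, rfl⟩
    obtain ⟨T, hTne, hside, hsub⟩ := cut_core G A B v hunion hinter hsep S hSne hSU
    have hcost : cost c (cutE G T) ≤ cost c (cutE G S) := cost_mono c hc hsub
    rcases hside with h | h
    · calc min (sInf LA) (sInf LB) ≤ sInf LA := min_le_left _ _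
        _ ≤ cost c (cutE G T) := csInf_le hLAbdd ⟨T, hTne, h, rfl⟩
        _ ≤ _ := hcost
    · calc min (sInf LA) (sInf LB) ≤ sInf LB := min_le_right _ _
        _ ≤ cost c (cutE G T) := csInf_le hLBbdd ⟨T, hTne, h, rfl⟩
        _ ≤ _ := hcost
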